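/- Suppose that for μ_Y-almost every y, N_y is a Stein operator for ν_y on C (i.e. for every probability measure ρ on ℝ: ρ = ν_y if and only if ∫ N_y f dρ = 0 for all f ∈ C), and that for every f ∈ C the map (x,y) ↦ N_y f(x) is essentially bounded with respect to ℙ_{M,Y} and jointly measurable. If the joint law ℙ_{X,Y} of (X,Y) equals the joint law ℙ_{M,Y} of (M,Y), then for every f ∈ C one has 𝔼[N_Y f(X) | σ(Y)] = 0 almost surely. -/

import Mathlib

open MeasureTheory ProbabilityTheory

/-- If for `μ_Y`-a.e. `y`, `N y` is a Stein operator for `ν y` on `C`,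
and for every `f ∈ C` the map `(x, y) ↦ N y f x` is `ℙ_{M,Y}`-essentially bounded and
jointly measurable, then `ℙ_{X,Y} = ℙ_{M,Y}` implies
`𝔼[N_Y f(X) | σ(Y)] = 0` a.s. for every `f ∈ C`. -/
theorem stein_dependence_necessary_condexp
    {Ω : Type*} [MeasurableSpace Ω] (P : Measure Ω) [IsProbabilityMeasure P]
    (M Y X : Ω → ℝ) (hM : Measurable M) (hY : Measurable Y) (hX : Measurable X)
    (ν : Kernel ℝ ℝ) [IsMarkovKernel ν]
    (hcond : ∀ A B : Set ℝ, MeasurableSet A → MeasurableSet B →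
      Measure.map (fun ω => (M ω, Y ω)) P (A ×ˢ B)
        = ∫⁻ y in B, ν y A ∂(Measure.map Y P))
    (C : Set (ℝ → ℝ)) (N : ℝ → (ℝ → ℝ) → ℝ → ℝ)
    (hStein : ∀ᵐ y ∂(Measure.map Y P), ∀ ρ : Measure ℝ, IsProbabilityMeasure ρ →
      (ρ = ν y ↔ ∀ f ∈ C, ∫ x, N y f x ∂ρ = 0))
    (hmeas : ∀ f ∈ C, Measurable (fun p : ℝ × ℝ => N p.2 f p.1))
    (hbdd : ∀ f ∈ C, ∃ B : ℝ,
      ∀ᵐ p ∂(Measure.map (fun ω => (M ω, Y ω)) P), |N p.2 f p.1| ≤ B)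
    (hlaw : Measure.map (fun ω => (X ω, Y ω)) P = Measure.map (fun ω => (M ω, Y ω)) P) :
    ∀ f ∈ C,
      P[(fun ω => N (Y ω) f (X ω)) | MeasurableSpace.comap Y inferInstance] =ᵐ[P] 0 := by
  intro f hf
  obtain ⟨B, hB⟩ := hbdd f hf
  have hNf : Measurable (fun p : ℝ × ℝ => N p.2 f p.1) := hmeas f hf
  set μ : Measure ℝ := Measure.map Y P with hμdef
  haveI hμprob : IsProbabilityMeasure μ := Measure.isProbabilityMeasure_map hY.aemeasurable
  have hMY : Measurable (fun ω => (M ω, Y ω)) := hM.prodMk hY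
  have hXY : Measurable (fun ω => (X ω, Y ω)) := hX.prodMk hY
  haveI : IsProbabilityMeasure (Measure.map (fun ω => (M ω, Y ω)) P) :=
    Measure.isProbabilityMeasure_map hMY.aemeasurable
  -- the joint law of (M, Y) is the swap of μ ⊗ₘ ν
  have hjoint : Measure.map (fun ω => (M ω, Y ω)) P = Measure.map Prod.swap (μ ⊗ₘ ν) := by
    refine ext_of_generate_finite _ generateFrom_prod.symm isPiSystem_prod ?_ ?_
    · rintro s ⟨A, hA, B', hB', rfl⟩
      simp only [Set.mem_setOf_eq] at hA hB'
      rw [hcond A B' hA hB', Measure.map_apply measurable_swap (hA.prod hB')]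
      have hsw : Prod.swap ⁻¹' (A ×ˢ B') = B' ×ˢ A := by
        ext q; simp [Set.mem_prod, and_comm]
      rw [hsw, Measure.compProd_apply_prod hB' hA]
    · haveI : IsProbabilityMeasure (Measure.map (Prod.swap : ℝ × ℝ → ℝ × ℝ) (μ ⊗ₘ ν)) :=
        Measure.isProbabilityMeasure_map measurable_swap.aemeasurable
      simp
  -- a.e. bound w.r.t. μ ⊗ₘ ν for the swapped function
  have hsetmeas : MeasurableSet {p : ℝ × ℝ | |N p.2 f p.1| ≤ B} :=
    measurableSet_le hNf.abs measurable_const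
  have hB' : ∀ᵐ q ∂(μ ⊗ₘ ν), |N q.1 f q.2| ≤ B := by
    have := hB
    rw [hjoint, MeasureTheory.ae_map_iff measurable_swap.aemeasurable hsetmeas] at this
    exact this
  -- integrability on μ ⊗ₘ ν
  have hint : Integrable (fun q : ℝ × ℝ => N q.1 f q.2) (μ ⊗ₘ ν) := by
    refine ⟨(hNf.comp measurable_swap).aestronglyMeasurable, ?_⟩
    exact HasFiniteIntegral.of_bounded (C := B) (hB'.mono fun q hq => by
      simpa [Real.norm_eq_abs] using hq)
  -- a.e. vanishing of the inner integral
  have hzero : ∀ᵐ y ∂μ, ∫ x, N y f x ∂(ν y) = 0 := by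
    filter_upwards [hStein] with y hy
    exact ((hy (ν y) inferInstance).mp rfl) f hf
  -- integrability of ω ↦ N (Y ω) f (X ω)
  have hintP : Integrable (fun ω => N (Y ω) f (X ω)) P := by
    have hae : ∀ᵐ ω ∂P, |N (Y ω) f (X ω)| ≤ B := by
      have := hB
      rw [← hlaw, MeasureTheory.ae_map_iff hXY.aemeasurable hsetmeas] at this
      exact this
    refine ⟨(hNf.comp hXY).aestronglyMeasurable, ?_⟩
    exact HasFiniteIntegral.of_bounded (C := B) (hae.mono fun ω hω => by
      simpa [Real.norm_eq_abs] using hω)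
  -- set integrals vanish
  have hsetint : ∀ s : Set Ω, MeasurableSet[MeasurableSpace.comap Y inferInstance] s →
      ∫ ω in s, N (Y ω) f (X ω) ∂P = 0 := by
    rintro s ⟨t, ht, rfl⟩
    have h1 : ∫ p in Prod.snd ⁻¹' t, N p.2 f p.1 ∂(Measure.map (fun ω => (X ω, Y ω)) P)
        = ∫ ω in Y ⁻¹' t, N (Y ω) f (X ω) ∂P :=
      setIntegral_map (measurable_snd ht) hNf.aestronglyMeasurable hXY.aemeasurable
    rw [← h1, hlaw, hjoint,
      setIntegral_map (measurable_snd ht) hNf.aestronglyMeasurable measurable_swap.aemeasurable]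
    have hpre : (Prod.swap : ℝ × ℝ → ℝ × ℝ) ⁻¹' (Prod.snd ⁻¹' t) = t ×ˢ Set.univ := by
      ext q; simp [Set.mem_prod]
    have hfun : (fun q : ℝ × ℝ => N (Prod.swap q).2 f (Prod.swap q).1)
        = fun q : ℝ × ℝ => N q.1 f q.2 := rfl
    rw [hpre, hfun, Measure.setIntegral_compProd ht MeasurableSet.univ hint.integrableOn]
    have : ∫ y in t, ∫ x in Set.univ, N y f x ∂(ν y) ∂μ = ∫ y in t, (0 : ℝ) ∂μ := by
      refine setIntegral_congr_ae ht ?_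
      filter_upwards [hzero] with y hy _
      simpa using hy
    rw [this, integral_zero]
  -- conclude via uniqueness of conditional expectation
  have hm : MeasurableSpace.comap Y inferInstance ≤ (inferInstance : MeasurableSpace Ω) :=
    hY.comap_le
  haveI : SigmaFinite (P.trim hm) := inferInstance
  have h0 : (fun _ : Ω => (0 : ℝ)) =ᵐ[P]
      P[(fun ω => N (Y ω) f (X ω)) | MeasurableSpace.comap Y inferInstance] := by
    refine ae_eq_condExp_of_forall_setIntegral_eq hm hintP
      (fun s _ _ => (integrable_zero _ _ _).integrableOn)
      (fun s hs _ => ?_)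
      (stronglyMeasurable_const.aestronglyMeasurable)
    rw [hsetint s hs]
    simp
  exact h0.symm
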